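/- A commutative cu-uniserial ring that is Noetherian and reduced (nonsingular) is a principal ideal domain. -/

import Mathlib

/-- The radical of a module: intersection of all maximal submodules. -/
def ModRadical (R M : Type*) [Ring R] [AddCommGroup M] [Module R M] : Submodule R M :=
  sInf {N : Submodule R M | IsCoatom N}

/-- A module is cyclic if it is generated by one element. -/
def IsCyclicMod (R M : Type*) [Ring R] [AddCommGroup M] [Module R M] : Prop :=
  ∃ x : M, Submodule.span R {x} = ⊤

/-- A module is uniform if it is nonzero and any two nonzero submodules intersect nontrivially. -/
def IsUniformMod (R M : Type*) [Ring R] [AddCommGroup M] [Module R M] : Prop :=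
  Nontrivial M ∧ ∀ A B : Submodule R M, A ≠ ⊥ → B ≠ ⊥ → A ⊓ B ≠ ⊥

/-- A module is cyclic-uniform uniserial (cu-uniserial) if it is nonzero and for every
nonzero finitely generated submodule `K`, the quotient `K / Rad K` is cyclic and uniform. -/
def IsCUUniserial (R M : Type*) [Ring R] [AddCommGroup M] [Module R M] : Prop :=
  Nontrivial M ∧ ∀ K : Submodule R M, K ≠ ⊥ → K.FG →
    IsCyclicMod R (↥K ⧸ ModRadical R ↥K) ∧ IsUniformMod R (↥K ⧸ ModRadical R ↥K)

/-- Any linear endomorphism maps the radical into the radical. -/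
lemma ModRadical.map_endo_le {R M : Type*} [Ring R] [AddCommGroup M] [Module R M]
    (f : M →ₗ[R] M) : (ModRadical R M).map f ≤ ModRadical R M := by
  refine le_sInf fun C hC => ?_
  rw [Submodule.map_le_iff_le_comap]
  by_cases htop : C.comap f = ⊤
  · rw [htop]; exact le_top
  · refine sInf_le ⟨htop, fun D hD => ?_⟩
    obtain ⟨d, hdD, hdC⟩ := SetLike.exists_of_lt hD
    have hfd : f d ∉ C := hdC
    have hlt : C < C ⊔ Submodule.span R {f d} :=
      left_lt_sup.2 fun hle => hfd (hle (Submodule.mem_span_singleton_self _))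
    have hsup : C ⊔ Submodule.span R {f d} = ⊤ := hC.2 _ hlt
    rw [eq_top_iff]
    intro m _
    have hm : f m ∈ C ⊔ Submodule.span R {f d} := hsup ▸ Submodule.mem_top
    obtain ⟨c, hc, s, hs, hcs⟩ := Submodule.mem_sup.1 hm
    obtain ⟨r, rfl⟩ := Submodule.mem_span_singleton.1 hs
    have h1 : m - r • d ∈ C.comap f := by
      simp only [Submodule.mem_comap, map_sub, map_smul]
      have : f m - r • f d = c := by rw [← hcs]; abel
      rw [this]; exact hc
    have : m = (m - r • d) + r • d := by abel
    rw [this]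
    exact D.add_mem (hD.le h1) (D.smul_mem r hdD)

/-- The radical is superfluous in a Noetherian module. -/
lemma ModRadical.sup_eq_top {R M : Type*} [Ring R] [AddCommGroup M] [Module R M]
    [IsNoetherian R M] {N : Submodule R M} (hN : N ⊔ ModRadical R M = ⊤) : N = ⊤ := by
  have : IsCoatomic (Submodule R M) :=
    isCoatomic_of_orderTop_gt_wellFounded (wellFounded_gt (α := Submodule R M))
  rcases eq_top_or_exists_le_coatom N with h | ⟨C, hC, hle⟩
  · exact h
  · exact absurd (top_le_iff.mp (hN ▸ sup_le hle (sInf_le hC))) hC.1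

theorem stmt8 {R : Type*} [CommRing R] [IsNoetherianRing R]
    (h : IsCUUniserial R R)
    (hns : ∀ r : R,
      (∀ I : Ideal R, I ≠ ⊥ → LinearMap.ker (LinearMap.toSpanSingleton R R r) ⊓ I ≠ ⊥) →
      r = 0) :
    IsDomain R ∧ IsPrincipalIdealRing R := by
  haveI : Nontrivial R := h.1
  -- R is a uniform module over itself
  have unif : ∀ A B : Ideal R, A ≠ ⊥ → B ≠ ⊥ → A ⊓ B ≠ ⊥ := by
    intro A B hA hB hAB
    obtain ⟨a, haA, ha0⟩ := Submodule.exists_mem_ne_zero_of_ne_bot hA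
    obtain ⟨b, hbB, hb0⟩ := Submodule.exists_mem_ne_zero_of_ne_bot hB
    set K : Ideal R := Submodule.span R {a} ⊔ Submodule.span R {b} with hKdef
    have haK : Submodule.span R {a} ≤ K := le_sup_left
    have hbK : Submodule.span R {b} ≤ K := le_sup_right
    have hKbot : K ≠ ⊥ := by
      intro hK
      exact ha0 (Submodule.span_singleton_eq_bot.1
        (le_bot_iff.1 (hK ▸ haK)))
    have hKfg : K.FG := Submodule.FG.sup (Submodule.fg_span_singleton a)
      (Submodule.fg_span_singleton b)
    obtain ⟨-, hu⟩ := (h.2 K hKbot hKfg).2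
    set A' : Submodule R ↥K := (Submodule.span R {a}).comap K.subtype with hA'def
    set B' : Submodule R ↥K := (Submodule.span R {b}).comap K.subtype with hB'def
    have hspan_inf : Submodule.span R {a} ⊓ Submodule.span R {b} = ⊥ := by
      refine le_bot_iff.1 ?_
      rw [← hAB]
      exact inf_le_inf ((Submodule.span_le).2 (Set.singleton_subset_iff.2 haA))
        ((Submodule.span_le).2 (Set.singleton_subset_iff.2 hbB))
    have hinf : A' ⊓ B' = ⊥ := by
      rw [hA'def, hB'def, ← Submodule.comap_inf, hspan_inf, Submodule.comap_bot,
        Submodule.ker_subtype]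
    have hsup : A' ⊔ B' = ⊤ := by
      apply Submodule.map_injective_of_injective K.injective_subtype
      rw [Submodule.map_sup, hA'def, hB'def, Submodule.map_comap_subtype,
        Submodule.map_comap_subtype, Submodule.map_subtype_top,
        inf_of_le_right haK, inf_of_le_right hbK]
    have hcompl : IsCompl A' B' := ⟨disjoint_iff.2 hinf, codisjoint_iff.2 hsup⟩
    set π : ↥K →ₗ[R] ↥K :=
      A'.subtype.comp (Submodule.linearProjOfIsCompl A' B' hcompl) with hπdef
    have hπA : ∀ x : ↥K, x ∈ A' → π x = x := by
      intro x hx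
      have := Submodule.linearProjOfIsCompl_apply_left hcompl ⟨x, hx⟩
      simp only [hπdef, LinearMap.comp_apply, Submodule.subtype_apply]
      exact congrArg Subtype.val this
    have hπB : ∀ y : ↥K, y ∈ B' → π y = 0 := by
      intro y hy
      simp only [hπdef, LinearMap.comp_apply, Submodule.subtype_apply]
      rw [show A'.linearProjOfIsCompl B' hcompl y = 0 from
        Submodule.linearProjOfIsCompl_apply_right' hcompl hy]
      rfl
    set q := (ModRadical R ↥K).mkQ with hqdef
    have haK' : a ∈ K := haK (Submodule.mem_span_singleton_self a)
    have hbK' : b ∈ K := hbK (Submodule.mem_span_singleton_self b)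
    have haA' : (⟨a, haK'⟩ : ↥K) ∈ A' := by
      simp only [hA'def, Submodule.mem_comap, Submodule.subtype_apply]
      exact Submodule.mem_span_singleton_self a
    have hbB' : (⟨b, hbK'⟩ : ↥K) ∈ B' := by
      simp only [hB'def, Submodule.mem_comap, Submodule.subtype_apply]
      exact Submodule.mem_span_singleton_self b
    have hAbar : A'.map q ≠ ⊥ := by
      intro hbot
      have hArad : A' ≤ ModRadical R ↥K := by
        intro x hx
        have hq : q x ∈ A'.map q := Submodule.mem_map_of_mem hx
        rw [hbot, Submodule.mem_bot] at hq
        have hk := LinearMap.mem_ker.2 hq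
        rwa [hqdef, Submodule.ker_mkQ] at hk
      have hB'top : B' = ⊤ := ModRadical.sup_eq_top (top_unique (by
        rw [← hsup]; exact sup_le (hArad.trans le_sup_right) le_sup_left))
      have : A' ≤ B' := hB'top ▸ le_top
      have : (⟨a, haK'⟩ : ↥K) ∈ A' ⊓ B' := ⟨haA', this haA'⟩
      rw [hinf, Submodule.mem_bot] at this
      exact ha0 (congrArg Subtype.val this)
    have hBbar : B'.map q ≠ ⊥ := by
      intro hbot
      have hBrad : B' ≤ ModRadical R ↥K := by
        intro x hx
        have hq : q x ∈ B'.map q := Submodule.mem_map_of_mem hx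
        rw [hbot, Submodule.mem_bot] at hq
        have hk := LinearMap.mem_ker.2 hq
        rwa [hqdef, Submodule.ker_mkQ] at hk
      have hA'top : A' = ⊤ := ModRadical.sup_eq_top (top_unique (by
        rw [← hsup]; exact sup_le le_sup_left (hBrad.trans le_sup_right)))
      have : B' ≤ A' := hA'top ▸ le_top
      have : (⟨b, hbK'⟩ : ↥K) ∈ A' ⊓ B' := ⟨this hbB', hbB'⟩
      rw [hinf, Submodule.mem_bot] at this
      exact hb0 (congrArg Subtype.val this)
    have hintbar : A'.map q ⊓ B'.map q = ⊥ := by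
      rw [eq_bot_iff]
      rintro z ⟨hzA, hzB⟩
      obtain ⟨x, hx, rfl⟩ := hzA
      obtain ⟨y, hy, hxy⟩ := hzB
      have hker : x - y ∈ ModRadical R ↥K := by
        have : q (x - y) = 0 := by rw [map_sub, hxy, sub_self]
        rwa [hqdef, ← LinearMap.mem_ker, Submodule.ker_mkQ] at this
      have hxrad : x ∈ ModRadical R ↥K := by
        have hπxy : π (x - y) = x := by rw [map_sub, hπA x hx, hπB y hy, sub_zero]
        have : x ∈ (ModRadical R ↥K).map π := ⟨x - y, hker, hπxy⟩
        exact ModRadical.map_endo_le π this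
      have : q x = 0 := by
        rw [hqdef, ← LinearMap.mem_ker, Submodule.ker_mkQ]; exact hxrad
      rw [this]; exact Submodule.zero_mem ⊥
    exact hu (A'.map q) (B'.map q) hAbar hBbar hintbar
  -- Domain
  have hdom : IsDomain R := by
    have : NoZeroDivisors R := by
      constructor
      intro a b hab
      by_cases ha : a = 0
      · exact Or.inl ha
      · right
        apply hns b
        intro I hI
        have hker : Submodule.span R {a} ≤ LinearMap.ker (LinearMap.toSpanSingleton R R b) := by
          rw [Submodule.span_le, Set.singleton_subset_iff]
          simp only [SetLike.mem_coe, LinearMap.mem_ker, LinearMap.toSpanSingleton_apply,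
            smul_eq_mul]
          exact hab
        have hspan : Submodule.span R {a} ≠ ⊥ := by
          simpa [Submodule.span_singleton_eq_bot] using ha
        intro hbot
        exact unif (Submodule.span R {a}) I hspan hI
          (le_bot_iff.1 (hbot ▸ inf_le_inf_right I hker))
    exact NoZeroDivisors.to_isDomain R
  refine ⟨hdom, ⟨fun I => ?_⟩⟩
  by_cases hI : I = ⊥
  · rw [hI]; exact ⟨⟨0, (Submodule.span_zero_singleton R).symm⟩⟩
  · have hfg : I.FG := IsNoetherian.noetherian I
    obtain ⟨xb, hxb⟩ := (h.2 I hI hfg).1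
    obtain ⟨x, rfl⟩ := Submodule.mkQ_surjective (ModRadical R ↥I) xb
    have hmap : (Submodule.span R {x}).map (ModRadical R ↥I).mkQ = ⊤ := by
      rw [Submodule.map_span, Set.image_singleton]; exact hxb
    have hsup : Submodule.span R {x} ⊔ ModRadical R ↥I = ⊤ := by
      have := congrArg (Submodule.comap (ModRadical R ↥I).mkQ) hmap
      rw [Submodule.comap_map_mkQ, Submodule.comap_top] at this
      rw [sup_comm]; exact this
    have htop : Submodule.span R {x} = (⊤ : Submodule R ↥I) := ModRadical.sup_eq_top hsup
    have : Ideal.span {(x : R)} = I := by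
      have := congrArg (Submodule.map I.subtype) htop
      rwa [Submodule.map_span, Set.image_singleton, Submodule.map_subtype_top,
        Submodule.subtype_apply] at this
    exact ⟨⟨(x : R), this.symm⟩⟩
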